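/- For every integer m ≥ 1: ∑_{p=0}^{m−1} (−1)^{p+m−1}·S(p+m−1, p) = (m−1)!. -/
import Mathlib


/-- 2-associated Stirling subset numbers: `S(0,0)=1`, `S(n,k)=0` if `n<2k` and
`(n,k)≠(0,0)`, and `S(n,k)=k·S(n−1,k)+(n−1)·S(n−2,k−1)` for `n≥1`. -/
def S2 : ℕ → ℕ → ℕ
  | 0, 0 => 1
  | 0, _ + 1 => 0
  | 1, _ => 0
  | _ + 2, 0 => 0
  | n + 2, k + 1 => (k + 1) * S2 (n + 1) (k + 1) + (n + 1) * S2 n k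

lemma S2_eq_zero : ∀ n k, n < 2 * k → S2 n k = 0
  | 0, _ + 1, _ => rfl
  | 1, _, _ => rfl
  | _ + 2, 0, h => by omega
  | n + 2, k + 1, h => by
      rw [S2, S2_eq_zero (n + 1) (k + 1) (by omega), S2_eq_zero n k (by omega)]
      ring

lemma S2_zero_right : ∀ n, S2 (n + 1) 0 = 0
  | 0 => rfl
  | _ + 1 => rfl

open Finset in
lemma key (n : ℕ) :
    ∑ p ∈ range (n + 2), (-1 : ℤ) ^ (p + n + 1) * (S2 (p + n + 1) p : ℤ)
      = (n + 1) * ∑ p ∈ range (n + 1), (-1 : ℤ) ^ (p + n) * (S2 (p + n) p : ℤ) := by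
  have h0 : ∀ q ∈ range (n + 1),
      (-1 : ℤ) ^ (q + 1 + n + 1) * (S2 (q + 1 + n + 1) (q + 1) : ℤ)
      = (-1 : ℤ) ^ (q + n) * ((q + 1) * S2 (q + n + 1) (q + 1))
        + (-1 : ℤ) ^ (q + n) * ((q + n + 1) * S2 (q + n) q) := by
    intro q _
    have e : q + 1 + n + 1 = q + n + 2 := by omega
    rw [e, S2]
    push_cast
    ring
  rw [Finset.sum_range_succ', Finset.sum_congr rfl h0]
  rw [Finset.sum_add_distrib]
  have h1 : ∑ q ∈ range (n + 1), (-1 : ℤ) ^ (q + n) * ((q + 1) * S2 (q + n + 1) (q + 1))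
      = - ∑ q ∈ range (n + 1), ((q : ℤ) * ((-1) ^ (q + n) * S2 (q + n) q)) := by
    have hg := Finset.sum_range_succ' (fun r => (r : ℤ) * ((-1) ^ (r + n) * S2 (r + n) r)) (n + 1)
    have hgs := Finset.sum_range_succ (fun r => (r : ℤ) * ((-1) ^ (r + n) * S2 (r + n) r)) (n + 1)
    have hz : S2 (n + 1 + n) (n + 1) = 0 := S2_eq_zero _ _ (by omega)
    have hc : ∀ q ∈ range (n + 1),
        ((q + 1 : ℕ) : ℤ) * ((-1) ^ (q + 1 + n) * S2 (q + 1 + n) (q + 1))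
        = -((-1 : ℤ) ^ (q + n) * ((q + 1) * S2 (q + n + 1) (q + 1))) := by
      intro q _
      have e : q + 1 + n = q + n + 1 := by omega
      rw [e]
      push_cast
      ring
    simp only [hz] at hgs
    rw [hgs, Finset.sum_congr rfl hc] at hg
    simp only [Finset.sum_neg_distrib, Nat.cast_zero, zero_mul, mul_zero, add_zero,
      zero_add] at hg
    push_cast at hg ⊢
    linarith [hg]
  rw [h1]
  rw [Finset.mul_sum, neg_add_eq_sub, ← Finset.sum_sub_distrib]
  have : (-1 : ℤ) ^ (0 + n + 1) * (S2 (0 + n + 1) 0 : ℤ) = 0 := by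
    rw [S2_zero_right]; simp
  rw [this, add_zero]
  apply Finset.sum_congr rfl
  intro q _
  push_cast
  ring

open Finset in
lemma T_eq : ∀ n : ℕ, ∑ p ∈ range (n + 1), (-1 : ℤ) ^ (p + n) * (S2 (p + n) p : ℤ)
    = (Nat.factorial n : ℤ)
  | 0 => by simp [S2, Nat.factorial]
  | n + 1 => by
      have hk := key n
      have ht := T_eq n
      simp only [show ∀ p, p + (n + 1) = p + n + 1 from fun p => by omega]
      rw [hk, ht, Nat.factorial_succ]
      push_cast
      ring

/-- for `m ≥ 1`, `∑_{p=0}^{m−1} (−1)^{p+m−1}·S(p+m−1, p) = (m−1)!`. -/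
theorem stmt_16 (m : ℕ) (hm : 1 ≤ m) :
    ∑ p ∈ Finset.range m, (-1 : ℤ) ^ (p + m - 1) * (S2 (p + m - 1) p : ℤ)
      = (Nat.factorial (m - 1) : ℤ) := by
  obtain ⟨n, rfl⟩ : ∃ n, m = n + 1 := ⟨m - 1, by omega⟩
  simp only [Nat.add_sub_cancel]
  have e : ∀ p, p + (n + 1) - 1 = p + n := fun p => by omega
  simp only [e]
  exact T_eq n
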